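/- arXiv:1107.4380 — 4 statements merged into one kernel-verified Lean document; each statement's English description precedes it below -/
import Mathlib

section
/- For every nonzero linear partial difference operator with constant coefficients P on functions Z^n → ℂ, there exists a function f : Z^n → ℂ such that P f equals the discrete delta function (which is 1 at the origin and 0 elsewhere). -/
lemma dme_base_inj : ∀ (n : ℕ) (M : ℤ) (_ : 0 < M) (d : Fin n → ℤ),
    (∀ i, |d i| < M) → (∑ i, d i * M ^ (i : ℕ)) = 0 → ∀ i, d i = 0 := by
  intro n
  induction n with
  | zero => intro M hM d hb hs i; exact absurd i.2 (by omega)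
  | succ n ih =>
    intro M hM d hb hs i
    rw [Fin.sum_univ_succ] at hs
    simp only [Fin.val_zero, pow_zero, mul_one, Fin.val_succ, pow_succ'] at hs
    have hS : d 0 + M * ∑ i : Fin n, d i.succ * M ^ (i : ℕ) = 0 := by
      rw [← hs]; ring_nf
      rw [Finset.mul_sum]
      congr 1
      apply Finset.sum_congr rfl
      intro j _
      ring
    set S := ∑ i : Fin n, d i.succ * M ^ (i : ℕ) with hSdef
    have hd0 : d 0 = 0 := by
      have hneg : d 0 = -(M * S) := by linarith
      have h1 : |d 0| = |M| * |S| := by rw [hneg, abs_neg, abs_mul]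
      rcases eq_or_ne S 0 with h | h
      · simpa [h] using h1
      · exfalso
        have : (1:ℤ) ≤ |S| := Int.one_le_abs h
        have : |M| * 1 ≤ |M| * |S| := by
          apply mul_le_mul_of_nonneg_left this (abs_nonneg M)
        have hb0 := hb 0
        rw [abs_of_pos hM] at *
        omega
    have hS0 : S = 0 := by
      have : M * S = 0 := by linarith
      rcases mul_eq_zero.mp this with h | h
      · omega
      · exact h
    have := ih M hM (fun i => d i.succ) (fun i => hb i.succ) hS0
    rcases Fin.eq_zero_or_eq_succ i with h | ⟨j, rfl⟩
    · rw [h]; exact hd0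
    · exact this j

/-- Recursive approximations to the fundamental solution. -/
noncomputable def dmeV (n : ℕ) (A' : Finset (Fin n → ℤ)) (c : (Fin n → ℤ) → ℂ)
    (α₀ : Fin n → ℤ) (μ : (Fin n → ℤ) → ℕ) : ℕ → (Fin n → ℤ) → ℂ
  | 0 => fun _ => 0
  | (N + 1) => fun k =>
      if μ k = 0 then 0
      else ((if k = α₀ then 1 else 0)
            - ∑ α ∈ A'.erase α₀, c α * dmeV n A' c α₀ μ N (k + α - α₀)) / c α₀

lemma dmeV_succ (n : ℕ) (A' : Finset (Fin n → ℤ)) (c : (Fin n → ℤ) → ℂ)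
    (α₀ : Fin n → ℤ) (μ : (Fin n → ℤ) → ℕ) (N : ℕ) (k : Fin n → ℤ) :
    dmeV n A' c α₀ μ (N + 1) k =
      if μ k = 0 then 0
      else ((if k = α₀ then 1 else 0)
            - ∑ α ∈ A'.erase α₀, c α * dmeV n A' c α₀ μ N (k + α - α₀)) / c α₀ := rfl

/-- Discrete Malgrange–Ehrenpreis theorem: every nonzero linear partial
difference operator with constant coefficients on `ℤ^n → ℂ` has a
fundamental solution. -/
theorem discrete_malgrange_ehrenpreis (n : ℕ) (A : Finset (Fin n → ℤ))
    (c : (Fin n → ℤ) → ℂ) (hne : ∃ α ∈ A, c α ≠ 0) :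
    ∃ f : (Fin n → ℤ) → ℂ, ∀ m : Fin n → ℤ,
      (∑ α ∈ A, c α * f (m + α)) = if m = 0 then 1 else 0 := by
  classical
  -- the support of the operator
  set A' : Finset (Fin n → ℤ) := A.filter (fun α => c α ≠ 0) with hA'def
  have hA'ne : A'.Nonempty := by
    obtain ⟨α, hαA, hcα⟩ := hne
    exact ⟨α, by simp [hA'def, hαA, hcα]⟩
  have hA'c : ∀ α ∈ A', c α ≠ 0 := by
    intro α hα
    simp only [hA'def, Finset.mem_filter] at hα
    exact hα.2
  -- a bound on coordinates of elements of A'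
  set B : ℕ := A'.sup (fun α => Finset.univ.sup (fun i => (α i).natAbs)) with hBdef
  have hBnd : ∀ α ∈ A', ∀ i, |α i| ≤ (B : ℤ) := by
    intro α hα i
    have h1 : (α i).natAbs ≤ Finset.univ.sup (fun i => (α i).natAbs) :=
      Finset.le_sup (f := fun i => (α i).natAbs) (Finset.mem_univ i)
    have h2 : Finset.univ.sup (fun i => (α i).natAbs) ≤ B :=
      Finset.le_sup (f := fun α => Finset.univ.sup (fun i => (α i).natAbs)) hα
    have h3 : (α i).natAbs ≤ B := le_trans h1 h2
    rw [Int.abs_eq_natAbs]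
    exact_mod_cast h3
  set M : ℤ := 2 * (B : ℤ) + 1 with hMdef
  have hM : 0 < M := by rw [hMdef]; positivity
  clear_value A' B M
  clear hBdef
  -- the weight functional
  set w : (Fin n → ℤ) → ℤ := fun x => ∑ i, x i * M ^ (i : ℕ) with hwdef
  have w_add : ∀ x y, w (x + y) = w x + w y := by
    intro x y
    simp only [hwdef, Pi.add_apply, add_mul, Finset.sum_add_distrib]
  have w_sub : ∀ x y, w (x - y) = w x - w y := by
    intro x y
    simp only [hwdef, Pi.sub_apply, sub_mul, Finset.sum_sub_distrib]
  have w_zero : w 0 = 0 := by simp [hwdef]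
  -- injectivity of w on A'
  have w_inj : ∀ α ∈ A', ∀ β ∈ A', w α = w β → α = β := by
    intro α hα β hβ hw
    have hd : ∀ i, (α - β) i = 0 := by
      apply dme_base_inj n M hM (α - β)
      · intro i
        have h1 := hBnd α hα i
        have h2 := hBnd β hβ i
        rw [abs_le] at h1 h2
        simp only [Pi.sub_apply]
        rw [abs_lt, hMdef]
        omega
      · show w (α - β) = 0
        rw [w_sub]
        exact sub_eq_zero_of_eq hw
    funext i
    have := hd i
    simp only [Pi.sub_apply] at this
    omega
  clear_value w
  -- a maximizer
  obtain ⟨α₀, hα₀A', hα₀max⟩ := Finset.exists_max_image A' w hA'ne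
  have hc₀ : c α₀ ≠ 0 := hA'c α₀ hα₀A'
  have hlt : ∀ α ∈ A', α ≠ α₀ → w α + 1 ≤ w α₀ := by
    intro α hα hne'
    have h1 := hα₀max α hα
    have h2 : w α ≠ w α₀ := fun h => hne' (w_inj α hα α₀ hα₀A' h)
    omega
  -- the measure
  set μ : (Fin n → ℤ) → ℕ := fun k => (w k - w α₀ + 1).toNat with hμdef
  clear_value μ
  have hwstep : ∀ (k : Fin n → ℤ), ∀ α ∈ A', α ≠ α₀ → w (k + α - α₀) = w k + w α - w α₀ := by
    intro k α _ _
    rw [w_sub, w_add]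
  have hμstep : ∀ (k : Fin n → ℤ), ∀ α ∈ A', α ≠ α₀ → μ (k + α - α₀) + 1 ≤ max (μ k) 1 := by
    intro k α hα hne'
    have h1 := hwstep k α hα hne'
    have h2 := hlt α hα hne'
    simp only [hμdef]
    omega
  -- stability of the approximations
  have stable : ∀ N, ∀ k, μ k ≤ N → dmeV n A' c α₀ μ N k = dmeV n A' c α₀ μ (μ k) k := by
    intro N
    induction N using Nat.strong_induction_on with
    | _ N ih =>
      intro k hk
      cases N with
      | zero =>
        have : μ k = 0 := by omega
        rw [this]
      | succ N' =>
        by_cases h0 : μ k = 0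
        · rw [h0, dmeV_succ, if_pos h0]; rfl
        · obtain ⟨p, hp⟩ : ∃ p, μ k = p + 1 := ⟨μ k - 1, by omega⟩
          rw [hp, dmeV_succ, dmeV_succ, if_neg h0, if_neg h0]
          have hsum : ∑ α ∈ A'.erase α₀, c α * dmeV n A' c α₀ μ N' (k + α - α₀)
              = ∑ α ∈ A'.erase α₀, c α * dmeV n A' c α₀ μ p (k + α - α₀) := by
            apply Finset.sum_congr rfl
            intro α hα
            obtain ⟨hne', hαA'⟩ := Finset.mem_erase.mp hα
            have hst := hμstep k α hαA' hne'
            have hμk' : μ (k + α - α₀) ≤ p := by omega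
            rw [ih N' (by omega) _ (by omega), ih p (by omega) _ hμk']
          rw [hsum]
  -- the fundamental solution
  set f : (Fin n → ℤ) → ℂ := fun k => dmeV n A' c α₀ μ (μ k) k with hfdef
  have hf : ∀ N k, μ k ≤ N → dmeV n A' c α₀ μ N k = f k := stable
  refine ⟨f, ?_⟩
  intro m
  have h1 : ∑ α ∈ A, c α * f (m + α) = ∑ α ∈ A', c α * f (m + α) := by
    rw [hA'def]
    exact (Finset.sum_filter_of_ne (by intro α _ h hc; exact h (by rw [hc]; ring))).symm
  have h2 : ∑ α ∈ A', c α * f (m + α)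
      = c α₀ * f (m + α₀) + ∑ α ∈ A'.erase α₀, c α * f (m + α) :=
    (Finset.add_sum_erase A' _ hα₀A').symm
  rw [h1, h2]
  have hpt : ∀ α : Fin n → ℤ, m + α₀ + α - α₀ = m + α := by
    intro α; funext i; simp only [Pi.add_apply, Pi.sub_apply]; ring
  by_cases hm : 0 ≤ w m
  · -- recursive case
    have hwma : w (m + α₀) = w m + w α₀ := w_add m α₀
    have hμpos : μ (m + α₀) ≠ 0 := by simp only [hμdef]; omega
    obtain ⟨p, hp⟩ : ∃ p, μ (m + α₀) = p + 1 := ⟨μ (m + α₀) - 1, by omega⟩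
    have key : f (m + α₀) = ((if m + α₀ = α₀ then 1 else 0)
        - ∑ α ∈ A'.erase α₀, c α * f (m + α)) / c α₀ := by
      show dmeV n A' c α₀ μ (μ (m + α₀)) (m + α₀) = _
      rw [hp, dmeV_succ, if_neg hμpos]
      congr 2
      apply Finset.sum_congr rfl
      intro α hα
      obtain ⟨hne', hαA'⟩ := Finset.mem_erase.mp hα
      have hst := hμstep (m + α₀) α hαA' hne'
      rw [hf p _ (by omega), hpt α]
    rw [key]
    have hcond : (if m + α₀ = α₀ then (1:ℂ) else 0) = (if m = 0 then 1 else 0) := by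
      simp [add_eq_right]
    rw [hcond]
    set D : ℂ := if m = 0 then 1 else 0 with hD
    set S : ℂ := ∑ α ∈ A'.erase α₀, c α * f (m + α) with hS
    field_simp
    ring
  · -- zero case
    have hz : ∀ α ∈ A', f (m + α) = 0 := by
      intro α hα
      have hwa : w α ≤ w α₀ := hα₀max α hα
      have hwma : w (m + α) = w m + w α := w_add m α
      have hμ0 : μ (m + α) = 0 := by simp only [hμdef]; omega
      show dmeV n A' c α₀ μ (μ (m + α)) (m + α) = 0
      rw [hμ0]; rfl
    have hm0 : m ≠ 0 := by
      intro h; rw [h, w_zero] at hm; exact hm le_rfl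
    rw [if_neg hm0, hz α₀ hα₀A', mul_zero, zero_add]
    apply Finset.sum_eq_zero
    intro α hα
    rw [hz α (Finset.mem_of_mem_erase hα), mul_zero]
end

section
/- In one variable (n=1): for every nonzero Laurent polynomial symbol p(z) = Σ_{α∈A} c_α z^α with c_α ∈ ℂ, there exists f : Z → ℂ such that Σ_{α∈A} c_α f(m+α) = δ(m) for all m ∈ Z, where δ(0)=1 and δ(m)=0 otherwise. -/
noncomputable def solF (S : Finset ℤ) (c : ℤ → ℂ) (β : ℤ) : ℕ → ℂ
  | k =>
    ((if k = 0 then (1:ℂ) else 0) -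
      ∑ α ∈ S, c α * (if h : β ≤ (k:ℤ) + α ∧ ((k:ℤ) + α - β).toNat < k
        then solF S c β (((k:ℤ) + α - β).toNat) else 0)) / c β
  termination_by k => k
  decreasing_by exact h.2

theorem solF_eq (S : Finset ℤ) (c : ℤ → ℂ) (β : ℤ) (k : ℕ) :
    solF S c β k = ((if k = 0 then (1:ℂ) else 0) -
      ∑ α ∈ S, c α * (if β ≤ (k:ℤ) + α ∧ ((k:ℤ) + α - β).toNat < k
        then solF S c β (((k:ℤ) + α - β).toNat) else 0)) / c β := by
  rw [solF.eq_def]; simp only [dite_eq_ite]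

/-- One-dimensional discrete Malgrange–Ehrenpreis theorem: every nonzero
linear ordinary difference operator with constant coefficients has a
fundamental solution. -/
theorem discrete_malgrange_ehrenpreis_one_var (A : Finset ℤ) (c : ℤ → ℂ)
    (hne : ∃ α ∈ A, c α ≠ 0) :
    ∃ f : ℤ → ℂ, ∀ m : ℤ,
      (∑ α ∈ A, c α * f (m + α)) = if m = 0 then 1 else 0 := by
  classical
  obtain ⟨α₀, hα₀A, hα₀⟩ := hne
  set S : Finset ℤ := A.filter (fun α => c α ≠ 0) with hS
  have hSne : S.Nonempty := ⟨α₀, by simp [hS, hα₀A, hα₀]⟩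
  set β : ℤ := S.max' hSne with hβ
  have hβS : β ∈ S := S.max'_mem hSne
  have hcβ : c β ≠ 0 := (Finset.mem_filter.mp hβS).2
  have hle : ∀ α ∈ S, α ≤ β := fun α hα => S.le_max' α hα
  set T : Finset ℤ := S.erase β with hT
  have hlt : ∀ α ∈ T, α < β := fun α hα =>
    lt_of_le_of_ne (hle α (Finset.mem_of_mem_erase hα)) (Finset.ne_of_mem_erase hα)
  refine ⟨fun n => if β ≤ n then solF T c β (n - β).toNat else 0, fun m => ?_⟩
  simp only
  have hAS : ∑ α ∈ A, c α * (if β ≤ m + α then solF T c β (m + α - β).toNat else 0)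
      = ∑ α ∈ S, c α * (if β ≤ m + α then solF T c β (m + α - β).toNat else 0) := by
    rw [hS]
    exact (Finset.sum_filter_of_ne (fun α _ h hc => by simp [hc] at h)).symm
  rw [hAS]
  by_cases hm : 0 ≤ m
  · rw [← Finset.add_sum_erase S _ hβS, ← hT]
    have hmβ : β ≤ m + β := by linarith
    rw [if_pos hmβ, show m + β - β = m by ring]
    have hcast : ((m.toNat : ℤ)) = m := Int.toNat_of_nonneg hm
    rw [solF_eq]
    rw [hcast]
    rw [mul_comm, div_mul_cancel₀ _ hcβ]
    have hsum : ∑ α ∈ T, c α * (if β ≤ m + α ∧ (m + α - β).toNat < m.toNat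
        then solF T c β ((m + α - β).toNat) else 0)
        = ∑ α ∈ T, c α * (if β ≤ m + α then solF T c β (m + α - β).toNat else 0) := by
      refine Finset.sum_congr rfl fun α hα => ?_
      by_cases hb : β ≤ m + α
      · have h1 : 0 ≤ m + α - β := by linarith
        have h2 : m + α - β < m := by have := hlt α hα; linarith
        have h0 : 0 < m := lt_of_le_of_lt h1 h2
        have : (m + α - β).toNat < m.toNat := by
          omega
        rw [if_pos ⟨hb, this⟩, if_pos hb]
      · rw [if_neg (fun h => hb h.1), if_neg hb]
    rw [hsum, sub_add_cancel]
    by_cases h0 : m = 0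
    · simp [h0]
    · rw [if_neg (by omega), if_neg h0]
  · rw [if_neg (by omega)]
    refine Finset.sum_eq_zero fun α hα => ?_
    have : ¬ β ≤ m + α := by have := hle α hα; omega
    rw [if_neg this, mul_zero]
end

section
/- Let P be a nonzero Laurent polynomial in n variables and δ the delta functional on Laurent polynomials sending a Laurent polynomial to its constant coefficient. The assignment P·a ↦ δ(a) is a well-defined linear functional on the subspace P·ℂ[z_1^{±1},…,z_n^{±1}], and any linear extension T of it to all Laurent polynomials yields, via f(m) := T(z^m), a fundamental solution of the difference operator with symbol P. -/
/-- The assignment `P·a ↦ δ(a)` (constant coefficient of `a`) is well defined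
on the subspace `P·ℂ[z₁^{±1},…,z_n^{±1}]`, and any linear extension `T` of it
to all Laurent polynomials yields, via `f m := T (z^m)`, a fundamental solution
of the difference operator with symbol `P`. -/
theorem delta_functional_wellDefined_and_extension_gives_fundamental_solution
    (n : ℕ) (A : Finset (Fin n → ℤ)) (c : (Fin n → ℤ) → ℂ)
    (hne : ∃ α ∈ A, c α ≠ 0)
    (P : AddMonoidAlgebra ℂ (Fin n → ℤ))
    (hP : P = ∑ α ∈ A, AddMonoidAlgebra.single α (c α)) :
    (∀ a b : AddMonoidAlgebra ℂ (Fin n → ℤ), P * a = P * b → a.coeff 0 = b.coeff 0) ∧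
    ∀ T : AddMonoidAlgebra ℂ (Fin n → ℤ) →ₗ[ℂ] ℂ,
      (∀ a : AddMonoidAlgebra ℂ (Fin n → ℤ), T (P * a) = a.coeff 0) →
      ∀ m : Fin n → ℤ,
        (∑ α ∈ A, c α * T (AddMonoidAlgebra.single (m + α) 1)) =
          if m = 0 then 1 else 0 := by
  have hPne : P ≠ 0 := by
    obtain ⟨α, hα, hc⟩ := hne
    intro h0
    have hval : P.coeff α = c α := by
      rw [hP]
      rw [AddMonoidAlgebra.coeff_sum, Finsupp.finset_sum_apply]
      rw [Finset.sum_eq_single α]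
      · simp [AddMonoidAlgebra.coeff_single]
      · intro b _ hb
        simp [AddMonoidAlgebra.coeff_single, Finsupp.single_apply, hb]
      · intro h; exact absurd hα h
    rw [h0] at hval
    exact hc hval.symm
  constructor
  · intro a b h
    have := mul_left_cancel₀ hPne h
    rw [this]
  · intro T hT m
    have key : P * AddMonoidAlgebra.single m 1
        = ∑ α ∈ A, AddMonoidAlgebra.single (m + α) (c α) := by
      rw [hP, Finset.sum_mul]
      refine Finset.sum_congr rfl fun α _ => ?_
      rw [AddMonoidAlgebra.single_mul_single, mul_one, add_comm]
    have h1 : T (P * AddMonoidAlgebra.single m 1)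
        = ∑ α ∈ A, c α * T (AddMonoidAlgebra.single (m + α) 1) := by
      rw [key, map_sum]
      refine Finset.sum_congr rfl fun α _ => ?_
      have : (AddMonoidAlgebra.single (m + α) (c α) : AddMonoidAlgebra ℂ (Fin n → ℤ))
          = c α • AddMonoidAlgebra.single (m + α) 1 := by
        rw [AddMonoidAlgebra.smul_single', mul_one]
      rw [this, map_smul, smul_eq_mul]
    rw [← h1, hT]
    simp [AddMonoidAlgebra.coeff_single, Finsupp.single_apply]
end

section
/- Two-variable constructive fundamental solution via iterated Laurent series: let P(z_1,z_2) be a nonzero Laurent polynomial over ℂ. Then P(z_1^{-1}, z_2^{-1}) is invertible in the iterated field of formal Laurent series ℂ((z_2))((z_1)), and if each coefficient function m ↦ [z_1^{m_1} z_2^{m_2}] of this inverse is well-defined, then f(m_1,m_2) := coefficient of z_1^{m_1} z_2^{m_2} in the inverse is a fundamental solution: Σ_α c_α f(m+α) = δ(m,0) for all m ∈ Z^2. -/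
private lemma coeff_sum' {Γ R ι : Type*} [PartialOrder Γ] [AddCommMonoid R]
    (s : Finset ι) (f : ι → HahnSeries Γ R) (a : Γ) :
    (∑ i ∈ s, f i).coeff a = ∑ i ∈ s, (f i).coeff a :=
  map_sum (HahnSeries.coeff.addMonoidHom a) f s

private lemma key_aux (A : Finset (ℤ × ℤ)) (c : ℤ × ℤ → ℂ)
    (g : LaurentSeries (LaurentSeries ℂ)) (m : ℤ × ℤ) :
    (((∑ α ∈ A, HahnSeries.single (-α.1) (HahnSeries.single (-α.2) (c α))) * g).coeff
        m.1).coeff m.2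
      = ∑ α ∈ A, c α * (g.coeff (m.1 + α.1)).coeff (m.2 + α.2) := by
  rw [Finset.sum_mul A _ g, coeff_sum', coeff_sum']
  refine Finset.sum_congr rfl fun α hα => ?_
  have t1 : ((HahnSeries.single (-α.1) (HahnSeries.single (-α.2) (c α))) * g).coeff m.1
      = HahnSeries.single (-α.2) (c α) * g.coeff (m.1 + α.1) := by
    have h := HahnSeries.coeff_single_mul_add (b := -α.1) (a := m.1 + α.1)
      (r := HahnSeries.single (-α.2) (c α)) (x := g)
    rwa [show m.1 + α.1 + -α.1 = m.1 by ring] at h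
  have t2 : (HahnSeries.single (-α.2) (c α) * g.coeff (m.1 + α.1)).coeff m.2
      = c α * (g.coeff (m.1 + α.1)).coeff (m.2 + α.2) := by
    have h := HahnSeries.coeff_single_mul_add (b := -α.2) (a := m.2 + α.2)
      (r := c α) (x := g.coeff (m.1 + α.1))
    rwa [show m.2 + α.2 + -α.2 = m.2 by ring] at h
  rw [t1, t2]

/-- Two-variable constructive fundamental solution via iterated Laurent
series: `P(z₁⁻¹, z₂⁻¹)` is invertible in `ℂ((z₂))((z₁))`, and the
coefficient function of the inverse, `f(m₁,m₂) :=` coefficient of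
`z₁^{m₁} z₂^{m₂}`, is a fundamental solution of the operator with symbol
`P`. -/
theorem constructive_fundamental_solution_two_vars
    (A : Finset (ℤ × ℤ)) (c : ℤ × ℤ → ℂ) (hne : ∃ α ∈ A, c α ≠ 0) :
    ∃ g : LaurentSeries (LaurentSeries ℂ),
      (∑ α ∈ A, HahnSeries.single (-α.1) (HahnSeries.single (-α.2) (c α))) * g
          = 1 ∧
      ∀ m : ℤ × ℤ,
        (∑ α ∈ A, c α * (g.coeff (m.1 + α.1)).coeff (m.2 + α.2)) =
          if m = 0 then 1 else 0 := by
  classical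
  set P : LaurentSeries (LaurentSeries ℂ) :=
    ∑ α ∈ A, HahnSeries.single (-α.1) (HahnSeries.single (-α.2) (c α)) with hP
  obtain ⟨α₀, hα₀A, hα₀⟩ := hne
  have hPne : P ≠ 0 := by
    intro h
    have h1 : ((P.coeff (-α₀.1)).coeff (-α₀.2)) = c α₀ := by
      rw [coeff_sum', coeff_sum', Finset.sum_eq_single α₀]
      · simp
      · intro b hb hne
        by_cases h1 : -b.1 = -α₀.1
        · have h2 : ¬ (-α₀.2 = -b.2) := by
            intro h2
            exact hne (Prod.ext (by omega) (by omega))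
          simp only [HahnSeries.coeff_single]
          rw [if_pos h1.symm, HahnSeries.coeff_single, if_neg h2]
        · simp only [HahnSeries.coeff_single]
          rw [if_neg (fun h' => h1 h'.symm)]
          simp
      · intro h; exact absurd hα₀A h
    rw [h] at h1
    simp at h1
    exact hα₀ h1.symm
  have hinv : P * P⁻¹ = 1 := mul_inv_cancel₀ (G₀ := LaurentSeries (LaurentSeries ℂ)) hPne
  refine ⟨P⁻¹, hinv, ?_⟩
  intro m
  rw [← key_aux A c P⁻¹ m, hinv]
  rcases m with ⟨m1, m2⟩
  by_cases h1 : m1 = 0 <;> by_cases h2 : m2 = 0 <;>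
    simp [HahnSeries.coeff_one, h1, h2, Prod.ext_iff]
end
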